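/- Let {ρ_k} be an integration theory on a sub-DGA C′_F. Then the map δρ_k satisfies d(δρ_k(A)) = (−1)^k Σ δρ_k(A′)·δρ_1(A″), where the sum is over all 2-cuts (A′, A″) of A. In particular, ρ := δρ_1 : C′_F → N is a morphism of DGAs. -/

import Mathlib

open scoped BigOperators

noncomputable section

/-- A generator symbol `(a₀; a₁, …, aₙ; a_{n+1})` of the combinatorial DGA:
endpoint, middle sequence, endpoint. -/
abbrev GSym (S : Type) := S × List S × S

variable {S : Type} [DecidableEq S]

/-- `lastD a l` is the last element of `a :: l`. -/
def lastD (a : S) (l : List S) : S := (a :: l).getLast (List.cons_ne_nil _ _)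

/-- The full sequence `a₀, a₁, …, aₙ, a_{n+1}` of a symbol. -/
def fullSeq (A : GSym S) : List S := A.1 :: A.2.1 ++ [A.2.2]

/-- The list of 2-cuts of a symbol `A = (a₀; a₁,…,aₙ; a_{n+1})`: for each choice
`0 ≤ i < j ≤ n`, `(i,j) ≠ (0,n)`, the ordered pair
`((a₀; a₁,…,aᵢ,a_{j+1},…,aₙ; a_{n+1}), (aᵢ; a_{i+1},…,aⱼ; a_{j+1}))`. -/
def twoCuts (A : GSym S) : List (GSym S × GSym S) :=
  (List.range A.2.1.length).flatMap fun i =>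
    (List.range (A.2.1.length - i)).filterMap fun k =>
      if i = 0 ∧ k + 1 = A.2.1.length then none
      else
        some ((A.1, A.2.1.take i ++ A.2.1.drop (i + k + 1), A.2.2),
              (lastD A.1 (A.2.1.take i),
               (A.2.1.drop i).take (k + 1),
               (A.2.1.drop (i + k + 1)).headD A.2.2))

/-- One refinement step on a tuple of symbols: replace one component (in place)
by one of its 2-cuts. -/
def stepCuts (c : List (GSym S)) : List (List (GSym S)) :=
  (List.range c.length).flatMap fun p =>
    match c.drop p with
    | [] => []
    | B :: rest => (twoCuts B).map fun AB => c.take p ++ AB.1 :: AB.2 :: rest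

/-- All tuples obtainable from `c` by at most `n` refinement steps. -/
def cutsFuel : ℕ → List (GSym S) → List (List (GSym S))
  | 0, c => [c]
  | n + 1, c => (c :: (stepCuts c).flatMap (cutsFuel n)).dedup

/-- The symbol with middle letters decorated by their index (so that cuts are
taken "in terms of the indices and not the elements"). -/
def idxSym (A : GSym S) : GSym (ℕ × S) :=
  ((0, A.1), (A.2.1.zipIdx 1).map Prod.swap, (A.2.1.length + 1, A.2.2))

/-- Forget the index decorations. -/
def unIdx (B : GSym (ℕ × S)) : GSym S := (B.1.2, B.2.1.map Prod.snd, B.2.2.2)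

/-- The index-decorated cuts of `A` (k-cuts for all k, including the 1-cut). -/
def cutsIdx (A : GSym S) : List (List (GSym (ℕ × S))) :=
  cutsFuel A.2.1.length [idxSym A]

/-- All cuts of `A` (k-cuts for all `k ≥ 1`, including the trivial 1-cut),
as tuples of symbols; cuts are distinguished according to indices. -/
def cuts (A : GSym S) : List (List (GSym S)) :=
  (cutsIdx A).map fun c => c.map unIdx

/-- The cuts of `A` with exactly `k` components. -/
def cutsK (A : GSym S) (k : ℕ) : List (List (GSym S)) :=
  (cuts A).filter fun c => c.length = k

/-- The degree-0 part of the bar construction `B(C_S)⁰` spanned by bar words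
`[A₁|…|A_k]` in the degree-1 generators: formal ℚ-combinations of words. -/
abbrev Bar0 (S : Type) := List (GSym S) →₀ ℚ

/-- `Tcut(A) = Σ [A₁|…|A_k]`, summing over all cuts of `A`. -/
def Tcut (A : GSym S) : Bar0 S := ((cuts A).map fun c => Finsupp.single c (1 : ℚ)).sum

/-- An elementary cut: every component except (possibly) the first is formed of
consecutive elements of `A` (checked on the index-decorated level). -/
def elemCutsIdx (A : GSym S) : List (List (GSym (ℕ × S))) :=
  (cutsIdx A).filter fun c =>
    c.tail.all fun B => decide ((fullSeq B) <:+: fullSeq (idxSym A))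

/-- The elementary cuts of `A` (including the 1-cut). -/
def elemCuts (A : GSym S) : List (List (GSym S)) :=
  (elemCutsIdx A).map fun c => c.map unIdx

/-- All shuffles of two lists (one for each `(n,m)`-shuffle permutation). -/
def shuffles {α : Type} : List α → List α → List (List α)
  | [], l2 => [l2]
  | l1, [] => [l1]
  | a :: l1, b :: l2 =>
      ((shuffles l1 (b :: l2)).map (a :: ·)) ++ ((shuffles (a :: l1) l2).map (b :: ·))
  termination_by l1 l2 => l1.length + l2.length
  decreasing_by all_goals simp [List.length]

/-- The empty bar word, the unit of the shuffle product. -/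
def barOne {R : Type} [CommSemiring R] : List (GSym S) →₀ R := Finsupp.single [] 1

/-- The shuffle product on degree-0 bar words (all letters of degree 1, so all
signs are `+1`). -/
def barMulG {R : Type} [CommSemiring R] (x y : List (GSym S) →₀ R) :
    List (GSym S) →₀ R :=
  x.sum fun w1 c1 => y.sum fun w2 c2 =>
    (c1 * c2) • ((shuffles w1 w2).map fun w => Finsupp.single w (1 : R)).sum

/-- Shuffle product on `B(C_S)⁰`. -/
def barMul (x y : Bar0 S) : Bar0 S := barMulG x y

/-- Product of a list of elements of `B(C_S)⁰`. -/
def listProd (l : List (Bar0 S)) : Bar0 S := l.foldr barMul barOne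

/-! ## Statement 12: the differential of δρ_k, and ρ = δρ₁ is a DGA morphism -/

/-- Let `{ρ_k}` be an integration theory (abstractly: values in a
commutative differential algebra `R` equipped with the specialization operator
`δ` satisfying `δd = dδ`, `δ² = 0` and `δ(a·δb) = (δa)(δb)`, and satisfying the
integration-theory axiom (3)). Then
`d(δρ_k(A)) = (−1)^k Σ_{2-cuts} δρ_k(A′)·δρ₁(A″)`; in particular
`ρ := δρ₁` is a morphism of DGAs: `d(ρ(A)) = −Σ_{2-cuts} ρ(A′)·ρ(A″)`. -/
theorem delta_rho_differential {F R : Type} [DecidableEq F] [CommRing R] [Algebra ℚ R]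
    (d δ : R →ₗ[ℚ] R)
    (hdδ : ∀ x : R, δ (d x) = d (δ x))
    (hδδ : ∀ x : R, δ (δ x) = 0)
    (hδmul : ∀ x y : R, δ (x * δ y) = δ x * δ y)
    (ρ : ℕ → GSym F → R)
    (hd : ∀ k, 1 ≤ k → ∀ A : GSym F,
      d (ρ k A) = -δ (ρ (k + 1) A) +
        (-1 : R) ^ k * ((twoCuts A).map fun p => ρ k p.1 * δ (ρ 1 p.2)).sum) :
    (∀ k, 1 ≤ k → ∀ A : GSym F,
      d (δ (ρ k A)) =
        (-1 : R) ^ k * ((twoCuts A).map fun p => δ (ρ k p.1) * δ (ρ 1 p.2)).sum)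
    ∧ (∀ A : GSym F,
      d (δ (ρ 1 A)) = -((twoCuts A).map fun p => δ (ρ 1 p.1) * δ (ρ 1 p.2)).sum) := by
  have hsmul : ∀ x : R, ∀ k : ℕ, (-1 : R) ^ k * x = ((-1 : ℚ) ^ k) • x := by
    intro x k
    rw [Algebra.smul_def, map_pow, map_neg, map_one]
  have main : ∀ k, 1 ≤ k → ∀ A : GSym F,
      d (δ (ρ k A)) =
        (-1 : R) ^ k * ((twoCuts A).map fun p => δ (ρ k p.1) * δ (ρ 1 p.2)).sum := by
    intro k hk A
    rw [← hdδ, hd k hk A, map_add, map_neg, hδδ, neg_zero, zero_add,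
      hsmul _ k, map_smul, ← hsmul _ k]
    congr 1
    rw [map_list_sum]
    simp only [List.map_map]
    refine congrArg List.sum (List.map_congr_left fun p _ => ?_)
    exact hδmul _ _
  refine ⟨main, fun A => ?_⟩
  rw [main 1 le_rfl A, pow_one, neg_one_mul]
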